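/- In S_{8g}, the permutation Q^{4g} τ is a product of 4g disjoint transpositions, namely (1,4g+3)(3,4g+5)⋯(4g-1,4g+1)(2,4g+4)(4,4g+6)⋯(4g-2,8g). -/

import Mathlib

open Equiv

/-- `Q` is the `8g`-cycle `(1,2,…,8g)` of the paper, acting on the 0-indexed
type `Fin (8*g)` (label `ℓ ∈ {1,…,8g}` corresponds to `ℓ - 1 : Fin (8*g)`). -/
def Q (g : ℕ) : Equiv.Perm (Fin (8 * g)) := finRotate (8 * g)

/-- `τ = (1,3,…,4g−1)(2,4,…,4g)(8g−1,8g−3,…,4g+1)(8g,8g−2,…,4g+2)`.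
On 0-indexed labels this rotates the first half `{0,…,4g−1}` by `+2 (mod 4g)` and the
second half `{4g,…,8g−1}` by `−2 (mod 4g)`. -/
def tau (g : ℕ) : Equiv.Perm (Fin (8 * g)) :=
  ((finSumFinEquiv (m := 4 * g) (n := 4 * g)).trans
      (finCongr (show 4 * g + 4 * g = 8 * g by ring))).permCongr
    (Equiv.sumCongr ((finRotate (4 * g)) ^ 2) (((finRotate (4 * g))⁻¹) ^ 2))


private lemma finRotate_pow_val {N : ℕ} (hN : 0 < N) (m : ℕ) (x : Fin N) :
    (((finRotate N) ^ m) x).val = (x.val + m) % N := by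
  obtain ⟨n, rfl⟩ : ∃ n, N = n + 1 := ⟨N - 1, by omega⟩
  induction m with
  | zero => simp [Nat.mod_eq_of_lt x.isLt]
  | succ m ih =>
    rw [pow_succ', Equiv.Perm.mul_apply, finRotate_succ_apply, Fin.val_add, Fin.val_one', ih,
      ← Nat.add_mod]
    rw [Nat.add_assoc]

private lemma finRotate_inv_pow_val {N : ℕ} (hN : 2 ≤ N) (x : Fin N) :
    ((((finRotate N)⁻¹) ^ 2) x).val = (x.val + (N - 2)) % N := by
  have h : (((finRotate N)⁻¹) ^ 2) x
      = ⟨(x.val + (N - 2)) % N, Nat.mod_lt _ (by omega)⟩ := by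
    rw [inv_pow, Equiv.Perm.inv_eq_iff_eq]
    apply Fin.ext
    rw [finRotate_pow_val (by omega)]
    simp only [Fin.val_mk]
    rw [Nat.mod_add_mod, show x.val + (N - 2) + 2 = x.val + N by omega,
      Nat.add_mod_right, Nat.mod_eq_of_lt x.isLt]
  rw [h]

private lemma tau_val (g : ℕ) (hg : 1 ≤ g) (x : Fin (8 * g)) :
    (tau g x).val = if x.val < 4 * g then (x.val + 2) % (4 * g)
      else 4 * g + ((x.val - 4 * g) + (4 * g - 2)) % (4 * g) := by
  have h4 : 0 < 4 * g := by omega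
  unfold tau
  rw [Equiv.permCongr_apply]
  set e := (finSumFinEquiv (m := 4 * g) (n := 4 * g)).trans
      (finCongr (show 4 * g + 4 * g = 8 * g by ring)) with he
  by_cases hx : x.val < 4 * g
  · have hi : e.symm x = Sum.inl (⟨x.val, hx⟩ : Fin (4 * g)) := by
      rw [Equiv.symm_apply_eq]
      apply Fin.ext
      simp [he, finSumFinEquiv_apply_left]
    rw [hi, if_pos hx]
    simp only [Equiv.sumCongr_apply, Sum.map_inl]
    rw [he]
    simp only [Equiv.trans_apply, finSumFinEquiv_apply_left, finCongr_apply, Fin.coe_cast,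
      Fin.coe_castAdd]
    rw [finRotate_pow_val h4]
  · have hi : e.symm x = Sum.inr (⟨x.val - 4 * g, by have := x.isLt; omega⟩ : Fin (4 * g)) := by
      rw [Equiv.symm_apply_eq]
      apply Fin.ext
      simp [he, finSumFinEquiv_apply_right]
      omega
    rw [hi, if_neg hx]
    simp only [Equiv.sumCongr_apply, Sum.map_inr]
    rw [he]
    simp only [Equiv.trans_apply, finSumFinEquiv_apply_right, finCongr_apply, Fin.coe_cast,
      Fin.coe_natAdd]
    rw [finRotate_inv_pow_val (by omega)]


private lemma mod_recover {g a : ℕ} (hg : 1 ≤ g) (ha : a < 4 * g) :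
    ((a + 2) % (4 * g) + (4 * g - 2)) % (4 * g) = a := by
  rw [Nat.mod_add_mod, show a + 2 + (4 * g - 2) = a + 4 * g by omega,
    Nat.add_mod_right, Nat.mod_eq_of_lt ha]

/-- Properties (1)–(5) of Proposition 5.2 for the permutation `φ^{(α,β)} ∈ S_{8g}`
associated to a labelled minimally intersecting separating filling pair `(α,β)`.
In the 0-indexed convention, a paper label `ℓ` is odd (an `α`-arc) iff `ℓ - 1` is even.
(1) φ is parity reversing;
(2) φ is a product of two disjoint `4g`-cycles;
(3) one cycle contains all of `{1,3,…,4g−1}`, the other all of `{4g+1,…,8g−1}`;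
(4) a cycle containing an even label `2i` also contains `2i + 4g (mod 8g)`;
(5) the even labels in one cycle are all `≡ 2 (mod 4)`, in the other all `≡ 0 (mod 4)`. -/
def IsFillingPermAux (g : ℕ) (φ : Equiv.Perm (Fin (8 * g))) : Prop :=
  (∀ k, Even ((φ k).val) ↔ ¬ Even k.val) ∧
  φ.cycleType = {4 * g, 4 * g} ∧
  ((∀ k k' : Fin (8 * g), Even k.val → Even k'.val →
      k.val < 4 * g → k'.val < 4 * g → φ.SameCycle k k') ∧
   (∀ k k' : Fin (8 * g), Even k.val → Even k'.val →
      4 * g ≤ k.val → 4 * g ≤ k'.val → φ.SameCycle k k') ∧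
   (∀ k k' : Fin (8 * g), Even k.val → Even k'.val →
      k.val < 4 * g → 4 * g ≤ k'.val → ¬ φ.SameCycle k k')) ∧
  (∀ k : Fin (8 * g), ¬ Even k.val → φ.SameCycle k (((Q g) ^ (4 * g)) k)) ∧
  (∀ k k' : Fin (8 * g), ¬ Even k.val → ¬ Even k'.val → φ.SameCycle k k' →
      k.val % 4 = k'.val % 4)

/-- A *filling permutation*: a permutation of `S_{8g}` satisfying properties (1)–(6) of
Proposition 5.2.  By Proposition 5.2 and Theorem 5.3, minimally intersecting separating
filling pairs on `S_g` (up to labelling) correspond exactly to filling permutations. -/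
def IsFillingPerm (g : ℕ) (φ : Equiv.Perm (Fin (8 * g))) : Prop :=
  IsFillingPermAux g φ ∧ φ * (Q g) ^ (4 * g) * φ = tau g

/-- **`Q^{4g} τ` is a product of `4g` disjoint transpositions**, namely
`(1,4g+3)(3,4g+5)⋯(4g−1,4g+1)(2,4g+4)(4,4g+6)⋯(4g−2,8g)`.
In the 0-indexed convention, the transposition through label `ℓ = k+1` (with
`0 ≤ k < 4g`) is `(k, 4g + (k+2) mod 4g)`; the family `F` of these `4g`
transpositions is specified pointwise by the hypothesis `hF`. -/
theorem Q_pow_mul_tau_eq_prod_transpositions (g : ℕ) (hg : 1 ≤ g)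
    (F : Fin (4 * g) → Equiv.Perm (Fin (8 * g)))
    (hF : ∀ k : Fin (4 * g), F k =
      Equiv.swap (⟨k.val, by have := k.isLt; omega⟩ : Fin (8 * g))
        ⟨4 * g + (k.val + 2) % (4 * g), by
          have := k.isLt
          have h2 : (k.val + 2) % (4 * g) < 4 * g := Nat.mod_lt _ (by omega)
          omega⟩) :
    (List.ofFn F).Pairwise Equiv.Perm.Disjoint ∧
    (∀ k, (F k).IsSwap) ∧
    (Q g) ^ (4 * g) * tau g = (List.ofFn F).prod := by
  have h4 : 0 < 4 * g := by omega
  have hdisj : (List.ofFn F).Pairwise Equiv.Perm.Disjoint := by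
    rw [List.pairwise_ofFn]
    intro i j hij
    rw [hF i, hF j]
    have hne : i.val ≠ j.val := Nat.ne_of_lt hij
    have hmodne : (i.val + 2) % (4 * g) ≠ (j.val + 2) % (4 * g) := by
      intro h
      apply hne
      rw [← mod_recover hg i.isLt, h, mod_recover hg j.isLt]
    have hm1 : (i.val + 2) % (4 * g) < 4 * g := Nat.mod_lt _ h4
    have hm2 : (j.val + 2) % (4 * g) < 4 * g := Nat.mod_lt _ h4
    intro x
    by_cases hx : x.val = j.val ∨ x.val = 4 * g + (j.val + 2) % (4 * g)
    · left
      apply Equiv.swap_apply_of_ne_of_ne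
      · intro h; rw [Fin.ext_iff] at h; simp only at h
        rcases hx with hx | hx <;> omega
      · intro h; rw [Fin.ext_iff] at h; simp only at h
        rcases hx with hx | hx
        · have := j.isLt; omega
        · omega
    · right
      push_neg at hx
      apply Equiv.swap_apply_of_ne_of_ne
      · intro h; rw [Fin.ext_iff] at h; simp only at h; exact hx.1 h
      · intro h; rw [Fin.ext_iff] at h; simp only at h; exact hx.2 h
  refine ⟨hdisj, ?_, ?_⟩
  · intro k
    refine ⟨_, _, Fin.ne_of_val_ne ?_, hF k⟩
    simp only
    have h2 : (k.val + 2) % (4 * g) < 4 * g := Nat.mod_lt _ h4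
    have := k.isLt
    omega
  · apply Equiv.ext
    intro x
    apply Fin.ext
    have hL : (((Q g) ^ (4 * g) * tau g) x).val = ((tau g x).val + 4 * g) % (8 * g) := by
      rw [Equiv.Perm.mul_apply]
      exact finRotate_pow_val (by omega) _ _
    by_cases hx : x.val < 4 * g
    · set k : Fin (4 * g) := ⟨x.val, hx⟩ with hk
      have hmem : F k ∈ List.ofFn F := by
        rw [List.mem_ofFn]; exact ⟨k, rfl⟩
      have hxa : x = (⟨k.val, by have := k.isLt; omega⟩ : Fin (8 * g)) := Fin.ext rfl
      have hsupp : x ∈ (F k).support := by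
        rw [Equiv.Perm.mem_support, hF k, ← hxa, hxa, Equiv.swap_apply_left]
        intro h
        rw [Fin.ext_iff] at h
        simp only at h
        have h2 : (k.val + 2) % (4 * g) < 4 * g := Nat.mod_lt _ h4
        omega
      rw [← Equiv.Perm.eq_on_support_mem_disjoint hmem hdisj x hsupp, hF k, hxa,
        Equiv.swap_apply_left, hL, tau_val g hg, if_pos hx]
      simp only
      have h2 : (x.val + 2) % (4 * g) < 4 * g := Nat.mod_lt _ h4
      rw [Nat.mod_eq_of_lt (by omega)]
      rw [show k.val = x.val from rfl]
      omega
    · have hxlt := x.isLt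
      obtain ⟨kv, hkv⟩ : ∃ kv, kv = (x.val - 4 * g + (4 * g - 2)) % (4 * g) := ⟨_, rfl⟩
      have hkvlt : kv < 4 * g := hkv ▸ Nat.mod_lt _ h4
      have hm2 : (kv + 2) % (4 * g) < 4 * g := Nat.mod_lt _ h4
      have pf1 : kv < 8 * g := Nat.lt_of_lt_of_le hkvlt (by omega)
      have pf2 : 4 * g + (kv + 2) % (4 * g) < 8 * g :=
        Nat.lt_of_lt_of_le (Nat.add_lt_add_left hm2 _) (by omega)
      have hkx : 4 * g + (kv + 2) % (4 * g) = x.val := by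
        rw [hkv, Nat.mod_add_mod, show x.val - 4 * g + (4 * g - 2) + 2 = (x.val - 4 * g) + 4 * g
          by omega, Nat.add_mod_right, Nat.mod_eq_of_lt (by omega)]
        omega
      have hmem : F ⟨kv, hkvlt⟩ ∈ List.ofFn F := by
        rw [List.mem_ofFn]; exact ⟨⟨kv, hkvlt⟩, rfl⟩
      have hxb : x = (⟨4 * g + (kv + 2) % (4 * g), pf2⟩ : Fin (8 * g)) := Fin.ext hkx.symm
      have hswap : F ⟨kv, hkvlt⟩ x = (⟨kv, pf1⟩ : Fin (8 * g)) := by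
        rw [hF ⟨kv, hkvlt⟩, hxb]
        exact Equiv.swap_apply_right _ _
      have hsupp : x ∈ (F ⟨kv, hkvlt⟩).support := by
        rw [Equiv.Perm.mem_support, hswap]
        intro h
        rw [Fin.ext_iff] at h
        simp only [Fin.val_mk] at h
        omega
      have hR : (List.ofFn F).prod x = (⟨kv, pf1⟩ : Fin (8 * g)) :=
        ((Equiv.Perm.eq_on_support_mem_disjoint hmem hdisj x hsupp).symm).trans hswap
      rw [hR, hL, tau_val g hg, if_neg hx]
      simp only [Fin.val_mk]
      rw [← hkv, show 4 * g + kv + 4 * g = kv + 8 * g by ring, Nat.add_mod_right,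
        Nat.mod_eq_of_lt pf1]
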